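/- Let A be a commutative ring and X = Spec A its prime spectrum with the Zariski topology. The following are equivalent: (i) the set X^c of closed points of X is closed in X, and every open cover of X splits, i.e. for every family (U_i) of open subsets of X with union X, the canonical map from the topological disjoint union ⨿_i U_i to X admits a continuous section; (ii) X^c is closed in X and every connected component of X contains exactly one closed point. Moreover, when these conditions hold, the composite of the inclusion X^c ↪ X (with the subspace topology on X^c) and the quotient map X → π₀(X) to the space of connected components is a homeomorphism. -/

import Mathlib

universe u

/-- The set of closed points of a topological space (named to avoid clashing with Mathlib). -/
def spectrumClosedPoints (X : Type u) [TopologicalSpace X] : Set X :=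
  {x : X | IsClosed ({x} : Set X)}

/-- A topological space has *split open covers* if for every open cover `(U i)` the canonical map
from the topological disjoint union `Σ i, U i` admits a continuous section. -/
def SplitsOpenCovers (X : Type u) [TopologicalSpace X] : Prop :=
  ∀ (ι : Type u) (U : ι → Set X), (∀ i, IsOpen (U i)) → (⋃ i, U i) = Set.univ →
    ∃ s : X → Σ i, (U i : Set X), Continuous s ∧ ∀ x : X, ((s x).2 : X) = x


section Auxiliary

open Set

variable {R : Type u} [CommRing R]


lemma one_sub_prod_mem (t : Finset R) :
    1 - ∏ e ∈ t, (1 - e) ∈ Ideal.span (t : Set R) := by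
  classical
  induction t using Finset.induction with
  | empty => simp
  | insert _ _ hnot ih =>
    rename_i b t'
    rw [Finset.prod_insert hnot]
    have h1 : (1 : R) - (1 - b) * ∏ e ∈ t', (1 - e) =
        (1 - ∏ e ∈ t', (1 - e)) + b * ∏ e ∈ t', (1 - e) := by ring
    rw [h1]
    refine Ideal.add_mem _ (Ideal.span_mono (fun z hz => Finset.mem_insert_of_mem hz) ih) ?_
    exact Ideal.mul_mem_right _ _ (Ideal.subset_span (Finset.mem_insert_self _ _))

/-- Idempotents lift along ideals generated by idempotents. -/
lemma lift_idem {S : Set R} (hS : ∀ e ∈ S, IsIdempotentElem e) {a : R}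
    (ha : a * a - a ∈ Ideal.span S) :
    ∃ y : R, IsIdempotentElem y ∧ y - a ∈ Ideal.span S := by
  classical
  obtain ⟨t, htS, hat⟩ := Submodule.mem_span_finite_of_mem_span ha
  -- P = product of (1 - e) over t
  set P : R := ∏ e ∈ t, (1 - e) with hPdef
  have hidem : ∀ e ∈ t, IsIdempotentElem e := fun e he => hS e (htS he)
  have hP : P * P = P := by
    rw [hPdef, ← Finset.prod_mul_distrib]
    refine Finset.prod_congr rfl fun e he => ?_
    have h : e * e = e := hidem e he
    linear_combination h
  set e0 : R := 1 - P with he0def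
  have he0 : e0 * e0 = e0 := by rw [he0def]; linear_combination hP
  -- each element of t is in span {e0}
  have hmul : ∀ b ∈ t, b * P = 0 := by
    intro b hb
    rw [hPdef, ← Finset.mul_prod_erase t _ hb]
    have hbb := hidem b hb
    unfold IsIdempotentElem at hbb
    have : b * (1 - b) = 0 := by rw [mul_sub, mul_one, hbb, sub_self]
    rw [← mul_assoc, this, zero_mul]
  have hspan_le : Ideal.span (t : Set R) ≤ Ideal.span {e0} := by
    rw [Ideal.span_le]
    intro b hb
    have : b = b * e0 := by
      have := hmul b hb
      rw [he0def]; linear_combination this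
    rw [SetLike.mem_coe, this]
    exact Ideal.mul_mem_left _ _ (Ideal.subset_span rfl)
  -- e0 ∈ span t
  have he0mem : e0 ∈ Ideal.span (t : Set R) := by
    rw [he0def, hPdef]; exact one_sub_prod_mem t
  have he0S : e0 ∈ Ideal.span S := Ideal.span_mono htS he0mem
  -- a*a - a = c * e0
  obtain ⟨c, hc⟩ := Ideal.mem_span_singleton'.mp (hspan_le hat)
  refine ⟨a - a * e0, ?_, ?_⟩
  · unfold IsIdempotentElem
    linear_combination (1 - e0) * hc.symm + (a * a - c) * he0
  · have : a - a * e0 - a = -a * e0 := by ring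
    rw [this]
    exact Ideal.mul_mem_left _ _ he0S

/-- In a prime spectrum, the intersection of all clopen sets containing a point is its
connected component. -/
lemma quasicomponent_eq (x : PrimeSpectrum R) :
    ⋂₀ {Z : Set (PrimeSpectrum R) | IsClopen Z ∧ x ∈ Z} = connectedComponent x := by
  set S : Set R := {e : R | IsIdempotentElem e ∧ e ∈ x.asIdeal} with hSdef
  set I : Ideal R := Ideal.span S with hIdef
  have hstep1 : ⋂₀ {Z : Set (PrimeSpectrum R) | IsClopen Z ∧ x ∈ Z}
      = PrimeSpectrum.zeroLocus (I : Set R) := by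
    rw [hIdef, PrimeSpectrum.zeroLocus_span]
    apply subset_antisymm
    · intro z hz
      rw [PrimeSpectrum.mem_zeroLocus]
      intro f hf
      have hcl : IsClopen (PrimeSpectrum.basicOpen (1 - f) : Set (PrimeSpectrum R)) :=
        PrimeSpectrum.isClopen_iff.mpr ⟨1 - f, hf.1.one_sub, rfl⟩
      have hxmem : x ∈ (PrimeSpectrum.basicOpen (1 - f) : Set (PrimeSpectrum R)) := by
        rw [SetLike.mem_coe, PrimeSpectrum.mem_basicOpen]
        intro h1
        refine x.isPrime.ne_top ((Ideal.eq_top_iff_one _).mpr ?_)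
        have := x.asIdeal.add_mem hf.2 h1
        simpa using this
      have hmem := hz _ ⟨hcl, hxmem⟩
      rw [SetLike.mem_coe, PrimeSpectrum.mem_basicOpen] at hmem
      have h0 : f * (1 - f) = 0 := by rw [mul_sub, mul_one, hf.1.eq, sub_self]
      rcases z.isPrime.mem_or_mem (h0 ▸ z.asIdeal.zero_mem) with h | h
      · exact h
      · exact absurd h hmem
    · intro z hz Z hZ
      obtain ⟨hZc, hxZ⟩ := hZ
      obtain ⟨e, he, hbo⟩ := PrimeSpectrum.isClopen_iff.mp hZc
      subst hbo
      rw [SetLike.mem_coe, PrimeSpectrum.mem_basicOpen] at hxZ ⊢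
      have h0 : e * (1 - e) = 0 := by rw [mul_sub, mul_one, he.eq, sub_self]
      have h1e : (1 - e) ∈ x.asIdeal := by
        rcases x.isPrime.mem_or_mem (h0 ▸ x.asIdeal.zero_mem) with h | h
        · exact absurd h hxZ
        · exact h
      have h1ez : (1 - e) ∈ z.asIdeal :=
        (PrimeSpectrum.mem_zeroLocus _ _).mp hz ⟨he.one_sub, h1e⟩
      intro hez
      refine z.isPrime.ne_top ((Ideal.eq_top_iff_one _).mpr ?_)
      have := z.asIdeal.add_mem hez h1ez
      simpa using this
  have hidemQ : ∀ z : R ⧸ I, IsIdempotentElem z → z = 0 ∨ z = 1 := by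
    intro z hz
    obtain ⟨a, rfl⟩ := Ideal.Quotient.mk_surjective z
    have ha : a * a - a ∈ I := by
      have h : Ideal.Quotient.mk I (a * a) = Ideal.Quotient.mk I a := by
        rw [map_mul]; exact hz
      exact Ideal.Quotient.eq.mp h
    obtain ⟨y, hy, hyaI⟩ := lift_idem (fun e he => he.1) ha
    by_cases hyx : y ∈ x.asIdeal
    · left
      have hyI : y ∈ I := Ideal.subset_span ⟨hy, hyx⟩
      have haI : a ∈ I := by simpa using I.sub_mem hyI hyaI
      rwa [Ideal.Quotient.eq_zero_iff_mem]
    · right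
      have h0 : y * (1 - y) = 0 := by rw [mul_sub, mul_one, hy.eq, sub_self]
      have h1y : (1 - y) ∈ x.asIdeal := by
        rcases x.isPrime.mem_or_mem (h0 ▸ x.asIdeal.zero_mem) with h | h
        · exact absurd h hyx
        · exact h
      have h1yI : (1 - y) ∈ I := Ideal.subset_span ⟨hy.one_sub, h1y⟩
      have hya : Ideal.Quotient.mk I y = Ideal.Quotient.mk I a := Ideal.Quotient.eq.mpr hyaI
      have h1 : Ideal.Quotient.mk I (1 - y) = 0 := (Ideal.Quotient.eq_zero_iff_mem).mpr h1yI
      rw [map_sub, map_one, sub_eq_zero] at h1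
      rw [← hya, ← h1]
  have hpc : PreconnectedSpace (PrimeSpectrum (R ⧸ I)) := by
    constructor
    rw [isPreconnected_iff_subset_of_fully_disjoint_closed isClosed_univ]
    intro u v hu hv hcov hdisj
    have huv : u = vᶜ := by
      apply subset_antisymm
      · intro p hp hpv
        exact (disjoint_left.mp hdisj hp) hpv
      · intro p hpv
        rcases hcov (mem_univ p) with h | h
        · exact h
        · exact absurd h hpv
    have hclu : IsClopen u := ⟨hu, by rw [huv]; exact hv.isOpen_compl⟩
    obtain ⟨e, he, hbo⟩ := PrimeSpectrum.isClopen_iff.mp hclu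
    rcases hidemQ e he with rfl | rfl
    · right
      rw [PrimeSpectrum.basicOpen_zero] at hbo
      intro p _
      rcases hcov (mem_univ p) with h | h
      · rw [hbo] at h; exact absurd h (by simp)
      · exact h
    · left
      rw [PrimeSpectrum.basicOpen_one] at hbo
      rw [hbo]
      intro p _; trivial
  have hxI : x ∈ PrimeSpectrum.zeroLocus (I : Set R) := by
    rw [PrimeSpectrum.mem_zeroLocus]
    exact Ideal.span_le.mpr (fun e he => he.2)
  have hpre : IsPreconnected (PrimeSpectrum.zeroLocus (I : Set R)) := by
    have hrange : Set.range (PrimeSpectrum.comap (Ideal.Quotient.mk I))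
        = PrimeSpectrum.zeroLocus (I : Set R) := by
      rw [range_comap_of_surjective _ _ Ideal.Quotient.mk_surjective,
        Ideal.mk_ker]
    rw [← hrange, ← image_univ]
    exact (isPreconnected_univ).image _ (PrimeSpectrum.continuous_comap
      (Ideal.Quotient.mk I)).continuousOn
  rw [hstep1]
  apply subset_antisymm
  · exact hpre.subset_connectedComponent hxI
  · rw [← hstep1]
    exact subset_sInter fun Z hZ => hZ.1.connectedComponent_subset hZ.2

/-- Every nonempty closed subset of a prime spectrum contains a closed point, which moreover is
a specialization of any given point of the set. -/
lemma exists_closedPoint {C : Set (PrimeSpectrum R)} (hC : IsClosed C) {p : PrimeSpectrum R}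
    (hp : p ∈ C) : ∃ q ∈ C, IsClosed ({q} : Set (PrimeSpectrum R)) ∧ p ⤳ q := by
  obtain ⟨m, hm, hpm⟩ := p.asIdeal.exists_le_maximal p.isPrime.ne_top
  refine ⟨⟨m, hm.isPrime⟩, ?_, ?_, ?_⟩
  · have hspec : p ⤳ ⟨m, hm.isPrime⟩ := (PrimeSpectrum.le_iff_specializes _ _).mp hpm
    exact hC.closure_subset_iff.mpr (singleton_subset_iff.mpr hp)
      (specializes_iff_mem_closure.mp hspec)
  · exact (PrimeSpectrum.isClosed_singleton_iff_isMaximal _).mpr hm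
  · exact (PrimeSpectrum.le_iff_specializes _ _).mp hpm

/-- Compactness extraction: a clopen set squeezed between the quasicomponent and an open set. -/
lemma exists_clopen_subset {x : PrimeSpectrum R} {U : Set (PrimeSpectrum R)} (hU : IsOpen U)
    (hsub : connectedComponent x ⊆ U) :
    ∃ W : Set (PrimeSpectrum R), IsClopen W ∧ x ∈ W ∧ W ⊆ U := by
  classical
  have hQ : ⋂₀ {Z : Set (PrimeSpectrum R) | IsClopen Z ∧ x ∈ Z} ⊆ U :=
    (quasicomponent_eq x) ▸ hsub
  have hcomp : IsCompact Uᶜ := hU.isClosed_compl.isCompact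
  have hcover : Uᶜ ⊆ ⋃ Z : {Z : Set (PrimeSpectrum R) // IsClopen Z ∧ x ∈ Z}, (Z.1)ᶜ := by
    intro t ht
    by_contra hcon
    simp only [mem_iUnion, not_exists, mem_compl_iff, not_not] at hcon
    exact ht (hQ fun Z hZ => hcon ⟨Z, hZ⟩)
  obtain ⟨u, hu⟩ := hcomp.elim_finite_subcover _ (fun Z => Z.2.1.compl.isOpen) hcover
  refine ⟨⋂ Z ∈ u, Z.1, isClopen_biInter_finset fun Z _ => Z.2.1, mem_iInter₂.mpr fun Z _ => Z.2.2, ?_⟩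
  intro t ht
  by_contra htU
  obtain ⟨Z, hZu, hZt⟩ := mem_iUnion₂.mp (hu htU)
  exact hZt (mem_iInter₂.mp ht Z hZu)

instance t2_pi0 : T2Space (ConnectedComponents (PrimeSpectrum R)) := by
  constructor
  intro a b hab
  obtain ⟨x, rfl⟩ := ConnectedComponents.surjective_coe a
  obtain ⟨y, rfl⟩ := ConnectedComponents.surjective_coe b
  have hne : connectedComponent x ≠ connectedComponent y := fun h =>
    hab (ConnectedComponents.coe_eq_coe.mpr h)
  have hdisj : connectedComponent y ∩
      ⋂ Z : {Z : Set (PrimeSpectrum R) // IsClopen Z ∧ x ∈ Z}, Z.1 = ∅ := by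
    have h1 : (⋂ Z : {Z : Set (PrimeSpectrum R) // IsClopen Z ∧ x ∈ Z}, Z.1)
        = connectedComponent x := by
      rw [← quasicomponent_eq x, sInter_eq_iInter]
      rfl
    rw [h1]
    exact disjoint_iff_inter_eq_empty.mp (connectedComponent_disjoint hne).symm
  obtain ⟨u, hu⟩ := (isClosed_connectedComponent.isCompact).elim_finite_subfamily_closed
    _ (fun Z => Z.2.1.1) hdisj
  set W : Set (PrimeSpectrum R) := ⋂ Z ∈ u, Z.1 with hWdef
  have hWclopen : IsClopen W := isClopen_biInter_finset fun Z _ => Z.2.1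
  have hxW : x ∈ W := mem_iInter₂.mpr fun Z _ => Z.2.2
  have hyW : y ∉ W := fun h => by
    have : y ∈ connectedComponent y ∩ ⋂ Z ∈ u, Z.1 := ⟨mem_connectedComponent, h⟩
    rw [hu] at this
    exact this
  -- W is a union of components
  have hsatW : (ConnectedComponents.mk) ⁻¹' (ConnectedComponents.mk '' W) = W := by
    rw [connectedComponents_preimage_image]
    apply subset_antisymm
    · exact iUnion₂_subset fun z hz => hWclopen.connectedComponent_subset hz
    · intro z hz
      exact mem_biUnion hz mem_connectedComponent
  have hsatWc : (ConnectedComponents.mk) ⁻¹' (ConnectedComponents.mk '' Wᶜ) = Wᶜ := by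
    rw [connectedComponents_preimage_image]
    apply subset_antisymm
    · exact iUnion₂_subset fun z hz => hWclopen.compl.connectedComponent_subset hz
    · intro z hz
      exact mem_biUnion hz mem_connectedComponent
  refine ⟨ConnectedComponents.mk '' W, ConnectedComponents.mk '' Wᶜ, ?_, ?_, ⟨x, hxW, rfl⟩,
    ⟨y, hyW, rfl⟩, ?_⟩
  · rw [← ConnectedComponents.isQuotientMap_coe.isOpen_preimage, hsatW]
    exact hWclopen.isOpen
  · rw [← ConnectedComponents.isQuotientMap_coe.isOpen_preimage, hsatWc]
    exact hWclopen.compl.isOpen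
  · rw [disjoint_left]
    rintro c ⟨w, hw, rfl⟩ ⟨w', hw', hww⟩
    have hcomp : connectedComponent w' = connectedComponent w :=
      ConnectedComponents.coe_eq_coe.mp hww
    exact hw' (hWclopen.connectedComponent_subset hw (hcomp ▸ mem_connectedComponent))

/-- From a finite clopen refinement of an open cover one can construct a continuous section of
the canonical map from the disjoint union. -/
lemma section_of_finite_clopen_refinement {X : Type u} [TopologicalSpace X] {ι : Type u}
    (U : ι → Set X) (n : ℕ) (W : Fin n → Set X) (hW : ∀ k, IsClopen (W k))
    (hcov : ∀ x : X, ∃ k, x ∈ W k) (ind : Fin n → ι) (hWU : ∀ k, W k ⊆ U (ind k)) :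
    ∃ s : X → Σ i, (U i : Set X), Continuous s ∧ ∀ x : X, ((s x).2 : X) = x := by
  classical
  -- the least index containing x
  have hP : ∀ x : X, ∃ m : ℕ, ∃ h : m < n, x ∈ W ⟨m, h⟩ := fun x => by
    obtain ⟨k, hk⟩ := hcov x
    exact ⟨k.1, k.2, hk⟩
  let K : X → Fin n := fun x => ⟨Nat.find (hP x), (Nat.find_spec (hP x)).choose⟩
  have hxK : ∀ x : X, x ∈ W (K x) := fun x => (Nat.find_spec (hP x)).choose_spec
  have hKmin : ∀ (x : X) (m : Fin n), m.1 < (K x).1 → x ∉ W m := by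
    intro x m hm hxm
    exact Nat.find_min (hP x) hm ⟨m.2, by simpa using hxm⟩
  -- the fibers of K are locally determined on these open sets
  set V : Fin n → Set X := fun k => W k \ ⋃ (m : Fin n) (_ : m.1 < k.1), W m with hVdef
  have hVopen : ∀ k, IsOpen (V k) := by
    intro k
    apply (hW k).isOpen.sdiff
    exact isClosed_iUnion_of_finite fun m => isClosed_iUnion_of_finite fun _ => (hW m).isClosed
  have hxV : ∀ x : X, x ∈ V (K x) := by
    intro x
    refine ⟨hxK x, ?_⟩
    intro hx
    obtain ⟨m, hm⟩ := mem_iUnion.mp hx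
    obtain ⟨hmlt, hxm⟩ := mem_iUnion.mp hm
    exact hKmin x m hmlt hxm
  have hKV : ∀ (k : Fin n) (y : X), y ∈ V k → K y = k := by
    intro k y hy
    have h1 : Nat.find (hP y) ≤ k.1 := Nat.find_le ⟨k.2, by simpa using hy.1⟩
    have h2 : ¬ (K y).1 < k.1 := by
      intro hlt
      exact hy.2 (mem_iUnion.mpr ⟨K y, mem_iUnion.mpr ⟨hlt, hxK y⟩⟩)
    exact Fin.ext (le_antisymm h1 (not_lt.mp h2))
  refine ⟨fun x => ⟨ind (K x), ⟨x, hWU (K x) (hxK x)⟩⟩, ?_, fun x => rfl⟩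
  rw [continuous_iff_continuousAt]
  intro x
  have hcont : ∀ k : Fin n, Continuous
      (fun y : (V k) => (⟨ind (K y.1), ⟨y.1, hWU (K y.1) (hxK y.1)⟩⟩ : Σ i, (U i : Set X))) := by
    intro k
    have heq : (fun y : (V k) => (⟨ind (K y.1), ⟨y.1, hWU (K y.1) (hxK y.1)⟩⟩ : Σ i, (U i : Set X)))
        = fun y : (V k) => ⟨ind k, ⟨y.1, hWU k y.2.1⟩⟩ := by
      funext y
      have h := hKV k y.1 y.2
      exact Sigma.ext (by show ind (K y.1) = ind k; rw [h])
        ((Subtype.heq_iff_coe_eq (fun z => by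
          show z ∈ U (ind (K y.1)) ↔ z ∈ U (ind k); rw [h])).mpr rfl)
    rw [heq]
    exact continuous_sigmaMk.comp (Continuous.subtype_mk continuous_subtype_val _)
  have hcOn : ContinuousOn (fun x => (⟨ind (K x), ⟨x, hWU (K x) (hxK x)⟩⟩ : Σ i, (U i : Set X)))
      (V (K x)) := by
    rw [continuousOn_iff_continuous_restrict]
    exact hcont (K x)
  exact hcOn.continuousAt ((hVopen (K x)).mem_nhds (hxV x))

lemma splits_of_unique
    (h : ∀ x : PrimeSpectrum R, ∃! y, y ∈ connectedComponent x ∧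
      IsClosed ({y} : Set (PrimeSpectrum R))) :
    SplitsOpenCovers (PrimeSpectrum R) := by
  intro ι U hU hcov
  classical
  have key : ∀ x : PrimeSpectrum R, ∃ (Z : Set (PrimeSpectrum R)) (j : ι),
      IsClopen Z ∧ x ∈ Z ∧ Z ⊆ U j := by
    intro x
    obtain ⟨y, ⟨hyC, hyc⟩, hyu⟩ := h x
    obtain ⟨j, hyj⟩ : ∃ j, y ∈ U j := mem_iUnion.mp (hcov ▸ mem_univ y)
    have hCU : connectedComponent x ⊆ U j := by
      intro z hz
      obtain ⟨w, hwC, hwcl, hzw⟩ := exists_closedPoint isClosed_connectedComponent hz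
      have hwy : w = y := hyu w ⟨hwC, hwcl⟩
      exact (hwy ▸ hzw).mem_open (hU j) hyj
    obtain ⟨W, hWc, hxW, hWU⟩ := exists_clopen_subset (hU j) hCU
    exact ⟨W, j, hWc, hxW, hWU⟩
  choose Z jx hZc hZx hZU using key
  obtain ⟨t, ht⟩ := isCompact_univ.elim_finite_subcover Z (fun x => (hZc x).isOpen)
    (fun x _ => mem_iUnion.mpr ⟨x, hZx x⟩)
  let e := t.equivFin
  apply section_of_finite_clopen_refinement U t.card (fun k => Z (e.symm k).1)
    (fun k => hZc _) ?_ (fun k => jx (e.symm k).1) (fun k => hZU _)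
  intro x
  obtain ⟨y, hyt, hxy⟩ := mem_iUnion₂.mp (ht (mem_univ x))
  exact ⟨e ⟨y, hyt⟩, by simpa [e] using hxy⟩

lemma unique_of_splits (hs : SplitsOpenCovers (PrimeSpectrum R)) (x : PrimeSpectrum R) :
    ∃! y, y ∈ connectedComponent x ∧ IsClosed ({y} : Set (PrimeSpectrum R)) := by
  obtain ⟨q, hqC, hqcl, -⟩ :=
    exists_closedPoint isClosed_connectedComponent (mem_connectedComponent (x := x))
  refine ⟨q, ⟨hqC, hqcl⟩, ?_⟩
  rintro z ⟨hzC, hzcl⟩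
  by_contra hne
  set Ucov : ULift.{u} Bool → Set (PrimeSpectrum R) :=
    fun b => if b.down then ({z}ᶜ) else ({q}ᶜ) with hUdef
  have hUopen : ∀ b, IsOpen (Ucov b) := by
    intro b
    rcases b with ⟨b⟩
    cases b
    · simpa [hUdef] using hqcl.isOpen_compl
    · simpa [hUdef] using hzcl.isOpen_compl
  have hUcov : (⋃ b, Ucov b) = univ := by
    ext w
    simp only [mem_iUnion, mem_univ, iff_true]
    by_cases hwz : w = z
    · exact ⟨ULift.up false, by simp [hUdef, hwz]; exact fun h => hne (hwz ▸ h)⟩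
    · exact ⟨ULift.up true, by simp [hUdef, hwz]⟩
  obtain ⟨s, hscont, hsec⟩ := hs (ULift.{u} Bool) Ucov hUopen hUcov
  have hr : (Sigma.fst ⁻¹' {ULift.up true} :
      Set (Σ b, (Ucov b : Set (PrimeSpectrum R)))) = Set.range (Sigma.mk (ULift.up true)) := by
    ext ⟨a, b⟩
    constructor
    · rintro ha
      have : a = ULift.up true := ha
      subst this
      exact ⟨b, rfl⟩
    · rintro ⟨u, hu⟩
      exact (congrArg Sigma.fst hu).symm
  set T : Set (PrimeSpectrum R) := s ⁻¹' (Sigma.fst ⁻¹' {ULift.up true}) with hTdef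
  have hTclopen : IsClopen T := by
    rw [hTdef, hr]
    exact ⟨isClosed_range_sigmaMk.preimage hscont, isOpen_range_sigmaMk.preimage hscont⟩
  have hindex : ∀ w : PrimeSpectrum R, w ∈ Ucov (s w).1 := by
    intro w
    have h2 := (s w).2.2
    rwa [hsec w] at h2
  have hqT : q ∈ T := by
    have hiq := hindex q
    rw [hTdef]
    simp only [mem_preimage, mem_singleton_iff]
    rcases hsq : (s q).1 with ⟨b⟩
    cases b
    · rw [hsq] at hiq
      simp [hUdef] at hiq
    · rfl
  have hzT : z ∉ T := by
    have hiz := hindex z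
    rw [hTdef]
    simp only [mem_preimage, mem_singleton_iff]
    rcases hsz : (s z).1 with ⟨b⟩
    cases b
    · simp
    · rw [hsz] at hiz
      simp [hUdef] at hiz
  apply hzT
  have hcc : connectedComponent q ⊆ T := hTclopen.connectedComponent_subset hqT
  have hq' : connectedComponent q = connectedComponent x := (connectedComponent_eq hqC).symm
  exact hcc (hq' ▸ hzC)

end Auxiliary

/-- For `X = Spec A`: the set of closed points `X^c` is closed and all open
covers of `X` split iff `X^c` is closed and every connected component of `X` contains exactly one
closed point; moreover, in this case the composite `X^c ↪ X → π₀(X)` is a homeomorphism. -/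
theorem wLocal_spectrum_characterization (A : Type u) [CommRing A] :
    ((IsClosed (spectrumClosedPoints (PrimeSpectrum A)) ∧ SplitsOpenCovers (PrimeSpectrum A)) ↔
      (IsClosed (spectrumClosedPoints (PrimeSpectrum A)) ∧
        ∀ x : PrimeSpectrum A, ∃! y : PrimeSpectrum A,
          y ∈ connectedComponent x ∧ y ∈ spectrumClosedPoints (PrimeSpectrum A))) ∧
    ((IsClosed (spectrumClosedPoints (PrimeSpectrum A)) ∧ SplitsOpenCovers (PrimeSpectrum A)) →
      IsHomeomorph (fun x : spectrumClosedPoints (PrimeSpectrum A) =>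
        (ConnectedComponents.mk (x : PrimeSpectrum A)))) := by
  constructor
  · constructor
    · rintro ⟨hc, hs⟩
      exact ⟨hc, fun x => unique_of_splits hs x⟩
    · rintro ⟨hc, hu⟩
      exact ⟨hc, splits_of_unique hu⟩
  · rintro ⟨hc, hs⟩
    have hu := fun x => unique_of_splits hs x
    haveI : CompactSpace (spectrumClosedPoints (PrimeSpectrum A)) :=
      isCompact_iff_compactSpace.mp hc.isCompact
    haveI : T2Space (ConnectedComponents (PrimeSpectrum A)) := t2_pi0
    rw [isHomeomorph_iff_continuous_bijective]
    refine ⟨ConnectedComponents.continuous_coe.comp continuous_subtype_val, ?_, ?_⟩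
    · intro a b hab
      have h := ConnectedComponents.coe_eq_coe.mp hab
      obtain ⟨y, hy, hyu⟩ := hu a.1
      have h1 : (a : PrimeSpectrum A) = y := hyu _ ⟨mem_connectedComponent, a.2⟩
      have h2 : (b : PrimeSpectrum A) = y := hyu _ ⟨h ▸ mem_connectedComponent, b.2⟩
      exact Subtype.ext (h1.trans h2.symm)
    · intro c
      obtain ⟨w, rfl⟩ := ConnectedComponents.surjective_coe c
      obtain ⟨q, hqC, hqcl, -⟩ :=
        exists_closedPoint isClosed_connectedComponent (mem_connectedComponent (x := w))
      exact ⟨⟨q, hqcl⟩, ConnectedComponents.coe_eq_coe'.mpr hqC⟩
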